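/- Every finite path π from q to q' in a finite directed graph G can be reduced, by repeatedly deleting repeated edges and consecutive repetitions of vertices, to a path π̃ from q to q' with no repeated edges and no consecutive vertex repetitions, such that for every length-3 subpath q₀q₁q₂ of π̃: if (q₁,q₁) ∉ E then q₀q₁q₂ is a subpath of π, and otherwise π contains a subpath of the form q₀q₁…q₁q₂ (one or more copies of q₁). -/

import Mathlib

open List

namespace PathRed
variable {α : Type*}


/-- splitting an infix of an append -/
lemma infix_append_split {l x y : List α} (h : l <:+: x ++ y) :
    l <:+: x ∨ l <:+: y ∨ ∃ l₁ l₂, l = l₁ ++ l₂ ∧ l₁ <:+ x ∧ l₂ <+: y := by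
  obtain ⟨s, t, hst⟩ := h
  rw [show s ++ l ++ t = s ++ (l ++ t) by simp] at hst
  rcases append_eq_append_iff.1 hst with ⟨a, hx, hlt⟩ | ⟨c, hs, hy⟩
  · rcases append_eq_append_iff.1 hlt with ⟨a', ha, ht⟩ | ⟨c', hl, hy⟩
    · exact Or.inl ⟨s, a', by rw [hx, ha]; simp⟩
    · refine Or.inr (Or.inr ⟨a, c', hl, ⟨s, hx.symm⟩, ⟨t, hy.symm⟩⟩)
  · exact Or.inr (Or.inl ⟨c, t, by rw [hy]; simp⟩)

lemma suffix_prefix_infix {l₁ l₂ x y : List α} (h₁ : l₁ <:+ x) (h₂ : l₂ <+: y) :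
    l₁ ++ l₂ <:+: x ++ y := by
  obtain ⟨s, hs⟩ := h₁; obtain ⟨t, ht⟩ := h₂
  exact ⟨s, t, by rw [← hs, ← ht]; simp⟩

lemma suffix_getLast? {l L : List α} (h : l <:+ L) (hne : l ≠ []) :
    L.getLast? = l.getLast? := by
  obtain ⟨s, hs⟩ := h
  rw [← hs, getLast?_append, getLast?_eq_getLast hne]; rfl

lemma pair_mem_zip {a b : α} : ∀ {π : List α}, (a, b) ∈ π.zip π.tail →
    ∃ u v, π = u ++ a :: b :: v := by
  intro π
  induction π with
  | nil => simp
  | cons c rest ih =>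
    match rest with
    | [] => simp
    | d :: rest' =>
      intro h
      simp only [List.tail, zip_cons_cons, mem_cons] at h
      rcases h with h | h
      · obtain ⟨rfl, rfl⟩ := Prod.mk.inj h.symm
        exact ⟨[], rest', rfl⟩
      · obtain ⟨u, v, huv⟩ := ih h
        exact ⟨c :: u, v, by rw [huv]; rfl⟩


lemma dup_pair {a b : α} (hab : a ≠ b) : ∀ {π : List α},
    [(a, b), (a, b)] <+ π.zip π.tail → ∃ u m v, π = u ++ a :: b :: m ++ a :: b :: v := by
  intro π
  induction π with
  | nil => simp
  | cons c rest ih =>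
    match rest with
    | [] => simp
    | d :: rest' =>
      intro h
      simp only [List.tail, zip_cons_cons] at h
      rcases sublist_cons_iff.1 h with h | ⟨r, hr, hrsub⟩
      · obtain ⟨u, m, v, huv⟩ := ih h
        exact ⟨c :: u, m, v, by rw [show (d :: rest') = u ++ a :: b :: m ++ a :: b :: v from huv]; rfl⟩
      · obtain ⟨h1, h2⟩ := List.cons_eq_cons.mp hr
        obtain ⟨rfl, rfl⟩ := Prod.mk.inj h1
        have hrr : [(a, b)] <+ (b :: rest').zip rest' := h2 ▸ hrsub
        have hmem : (a, b) ∈ (b :: rest').zip (b :: rest').tail := by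
          simpa using singleton_sublist.1 hrr
        obtain ⟨u, v, huv⟩ := pair_mem_zip hmem
        match u with
        | [] => exact absurd (by simpa using congrArg List.head? huv) hab.symm
        | e :: u' =>
          have he : e = b := by have := congrArg List.head? huv; simp at this; exact this.symm
          refine ⟨[], u', v, ?_⟩
          rw [show b :: rest' = (e :: u') ++ a :: b :: v from huv, he]
          rfl

lemma chain'_cut1 {R : α → α → Prop} {x y : List α} {b : α}
    (h : Chain' R (x ++ b :: b :: y)) : Chain' R (x ++ b :: y) := by
  unfold Chain' at h ⊢
  rw [isChain_append] at h ⊢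
  refine ⟨h.1, ?_, fun p hp q hq => h.2.2 p hp q (by simpa using hq)⟩
  exact h.2.1.tail

lemma chain'_cut2 {R : α → α → Prop} {u m v : List α} {a b : α}
    (h : Chain' R (u ++ a :: b :: m ++ a :: b :: v)) : Chain' R (u ++ a :: b :: v) := by
  rw [show u ++ a :: b :: m ++ a :: b :: v = u ++ (a :: b :: (m ++ a :: b :: v)) by simp] at h
  unfold Chain' at h ⊢
  rw [isChain_append] at h ⊢
  refine ⟨h.1, ?_, fun p hp q hq => h.2.2 p hp q (by simpa using hq)⟩
  have h1 : R a b := (isChain_cons_cons.1 h.2.1).1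
  have h2 : Chain' R (b :: v) := h.2.1.suffix ⟨a :: b :: m ++ [a], by simp⟩
  exact isChain_cons_cons.2 ⟨h1, h2⟩

lemma exists_adj_eq : ∀ {π : List α}, ¬ π.Chain' (· ≠ ·) →
    ∃ x b y, π = x ++ b :: b :: y := by
  intro π
  induction π with
  | nil => intro h; exact absurd isChain_nil h
  | cons c rest ih =>
    match rest with
    | [] => intro h; exact absurd (isChain_singleton c) h
    | d :: rest' =>
      intro h
      unfold Chain' at h
      rw [isChain_cons_cons] at h
      push_neg at h
      by_cases hcd : c = d
      · exact ⟨[], c, rest', by rw [hcd]; rfl⟩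
      · obtain ⟨x, b, y, hxy⟩ := ih (h hcd)
        exact ⟨c :: x, b, y, by rw [show d :: rest' = x ++ b :: b :: y from hxy]; rfl⟩


lemma getLast?_cons_append (u : List α) (a : α) (l : List α) :
    (u ++ a :: l).getLast? = (a :: l).getLast? := by
  rw [getLast?_append]
  cases h : (a :: l).getLast? with
  | none => simp at h
  | some x => rfl

lemma step1 {x y : List α} {b q₀ q₁ q₂ : α} {m : ℕ} (hm : 1 ≤ m)
    (h : (q₀ :: (List.replicate m q₁ ++ [q₂])) <:+: x ++ b :: y) :
    ∃ m', 1 ≤ m' ∧ (q₀ :: (List.replicate m' q₁ ++ [q₂])) <:+: x ++ b :: b :: y := by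
  set l : List α := q₀ :: (List.replicate m q₁ ++ [q₂]) with hl
  have hbig : x ++ b :: b :: y = (x ++ [b]) ++ b :: y := by simp
  rw [show x ++ b :: y = (x ++ [b]) ++ y by simp] at h
  rcases infix_append_split h with h | h | ⟨l₁, l₂, hll, hsuf, hpre⟩
  · exact ⟨m, hm, hbig ▸ h.trans (⟨[], b :: y, by simp⟩ : (x ++ [b]) <:+: (x ++ [b]) ++ b :: y)⟩
  · exact ⟨m, hm, hbig ▸ h.trans ((show y <:+ (x ++ [b]) ++ b :: y from ⟨(x++[b]) ++ [b], by simp⟩).isInfix)⟩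
  · rcases eq_or_ne l₁ [] with rfl | h₁
    · simp only [nil_append] at hll
      exact ⟨m, hm, hbig ▸ (hll ▸ hpre.isInfix).trans
        ((show y <:+ (x ++ [b]) ++ b :: y from ⟨(x ++ [b]) ++ [b], by simp⟩).isInfix)⟩
    rcases eq_or_ne l₂ [] with rfl | h₂
    · rw [append_nil] at hll
      exact ⟨m, hm, hbig ▸ (hll ▸ hsuf.isInfix).trans ⟨[], b :: y, by simp⟩⟩
    -- both nonempty
    have hlast : l₁.getLast? = some b := by
      rw [← suffix_getLast? hsuf h₁, getLast?_concat]
    have hk1 : 1 ≤ l₁.length := length_pos_iff.2 h₁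
    have hkle : l₁.length ≤ m + 1 := by
      have : l.length = l₁.length + l₂.length := by rw [hll, length_append]
      have h2 : 1 ≤ l₂.length := length_pos_iff.2 h₂
      have : l.length = m + 2 := by simp [hl]
      omega
    set k := l₁.length with hk
    have hl₁ : l₁ = l.take k := by rw [hll]; exact (take_left' hk.symm).symm
    have hl₂ : l₂ = l.drop k := by rw [hll]; exact (drop_left' hk.symm).symm
    rcases eq_or_lt_of_le hk1 with hk1' | hk2
    · -- k = 1 : l₁ = [q₀], b = q₀, and l is a prefix of b :: y
      have : l₁ = [q₀] := by
        rw [hl₁, hl]; rw [← hk1']; rfl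
      have hbq : b = q₀ := by
        rw [this] at hlast; simpa using hlast.symm
      have : l <+: b :: y := by
        rw [hll, this, hbq]
        exact cons_prefix_cons.2 ⟨rfl, by
          have : l₂ = replicate m q₁ ++ [q₂] := by rw [hl₂, hl, ← hk1']; rfl
          rw [this] at hpre ⊢; exact hpre⟩
      exact ⟨m, hm, hbig ▸ this.isInfix.trans
        ((show b :: y <:+ (x ++ [b]) ++ b :: y from ⟨x ++ [b], rfl⟩).isInfix)⟩
    · -- 2 ≤ k ≤ m+1 : last of l₁ is q₁ = b, double it
      obtain ⟨n, hkn⟩ : ∃ n, k = n + 1 := ⟨k - 1, by omega⟩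
      have hn1 : 1 ≤ n := by omega
      have hnm : n ≤ m := by omega
      have hl₁' : l₁ = q₀ :: replicate n q₁ := by
        rw [hl₁, hl, hkn, take_succ_cons,
          take_append_of_le_length (by simpa using hnm), take_replicate,
          Nat.min_eq_left hnm]
      have hl₂' : l₂ = replicate (m - n) q₁ ++ [q₂] := by
        rw [hl₂, hl, hkn, drop_succ_cons,
          drop_append_of_le_length (by simpa using hnm), drop_replicate]
      have hbq : b = q₁ := by
        rw [hl₁'] at hlast
        have hne : (replicate n q₁ : List α) ≠ [] := by
          simp only [ne_eq, replicate_eq_nil_iff]; omega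
        rw [show (q₀ :: replicate n q₁) = [q₀] ++ replicate n q₁ by rfl,
          getLast?_append] at hlast
        rw [show n = (n - 1) + 1 by omega, replicate_succ', getLast?_concat] at hlast
        simpa using hlast.symm
      refine ⟨m + 1, by omega, ?_⟩
      have hinf : l₁ ++ b :: l₂ <:+: (x ++ [b]) ++ b :: y :=
        suffix_prefix_infix hsuf (cons_prefix_cons.2 ⟨rfl, hpre⟩)
      rw [hbig]
      have : l₁ ++ b :: l₂ = q₀ :: (replicate (m + 1) q₁ ++ [q₂]) := by
        rw [hl₁', hl₂', hbq]
        simp only [cons_append, List.cons.injEq, true_and]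
        rw [show (q₁ :: (replicate (m - n) q₁ ++ [q₂])) = replicate (m - n + 1) q₁ ++ [q₂] by
          rw [replicate_succ]; rfl]
        rw [← append_assoc, ← replicate_add]
        congr 2
        omega
      rwa [this] at hinf


/-- Phase 1: remove consecutive vertex repetitions. -/
lemma phase1 (E : α → α → Prop) : ∀ (n : ℕ) (π : List α), π.length = n → π.Chain' E →
    ∃ π₁ : List α, π₁.Chain' E ∧ π₁.Chain' (· ≠ ·) ∧ π₁.head? = π.head? ∧
      π₁.getLast? = π.getLast? ∧
      ∀ q₀ q₁ q₂, [q₀, q₁, q₂] <:+: π₁ →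
        ∃ m, 1 ≤ m ∧ (q₀ :: (List.replicate m q₁ ++ [q₂])) <:+: π := by
  intro n
  induction n using Nat.strong_induction_on with
  | _ n ih =>
    intro π hlen hE
    by_cases hne : π.Chain' (· ≠ ·)
    · exact ⟨π, hE, hne, rfl, rfl, fun q₀ q₁ q₂ h => ⟨1, le_refl 1, by simpa using h⟩⟩
    · obtain ⟨x, b, y, rfl⟩ := exists_adj_eq hne
      have hE' : Chain' E (x ++ b :: y) := chain'_cut1 hE
      have hlt : (x ++ b :: y).length < n := by
        simp only [length_append, length_cons] at hlen ⊢; omega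
      obtain ⟨π₁, h1, h2, h3, h4, h5⟩ := ih _ hlt (x ++ b :: y) rfl hE'
      refine ⟨π₁, h1, h2, ?_, ?_, ?_⟩
      · rw [h3]; cases x <;> simp
      · rw [h4, getLast?_append, getLast?_append, getLast?_cons_cons]
      · intro q₀ q₁ q₂ h
        obtain ⟨m, hm, hinf⟩ := h5 q₀ q₁ q₂ h
        exact step1 hm hinf

/-- transfer of length-3 subpaths through one loop deletion. -/
lemma step2 {u m v : List α} {a b q₀ q₁ q₂ : α}
    (h : [q₀, q₁, q₂] <:+: u ++ a :: b :: v) :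
    [q₀, q₁, q₂] <:+: u ++ a :: b :: m ++ a :: b :: v := by
  have hbig : u ++ a :: b :: m ++ a :: b :: v = (u ++ [a]) ++ (b :: (m ++ a :: b :: v)) := by
    simp
  rw [show u ++ a :: b :: v = (u ++ [a]) ++ b :: v by simp] at h
  rcases infix_append_split h with h | h | ⟨l₁, l₂, hll, hsuf, hpre⟩
  · exact hbig ▸ h.trans (⟨[], b :: (m ++ a :: b :: v), by simp⟩ :
      (u ++ [a]) <:+: (u ++ [a]) ++ (b :: (m ++ a :: b :: v)))
  · refine h.trans ((show b :: v <:+ u ++ a :: b :: m ++ a :: b :: v from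
      ⟨u ++ a :: b :: m ++ [a], by simp⟩).isInfix)
  · have hsfx : a :: b :: v <:+ u ++ a :: b :: m ++ a :: b :: v := ⟨u ++ a :: b :: m, by simp⟩
    match l₁, hll with
    | [], hll =>
      simp only [nil_append] at hll
      exact (hll ▸ hpre.isInfix).trans
        ((show b :: v <:+ u ++ a :: b :: m ++ a :: b :: v from
          ⟨u ++ a :: b :: m ++ [a], by simp⟩).isInfix)
    | [x₀], hll =>
      have hx : x₀ = a := by
        have := suffix_getLast? hsuf (by simp)
        rw [getLast?_concat] at this
        simpa using this.symm
      have hl₂ : l₂ = [q₁, q₂] ∧ x₀ = q₀ := by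
        constructor
        · have := congrArg List.tail hll; simpa using this.symm
        · have := congrArg List.head? hll; simpa using this.symm
      have : [q₀, q₁, q₂] <+: a :: b :: v := by
        rw [show ([q₀, q₁, q₂] : List α) = q₀ :: [q₁, q₂] from rfl, ← hl₂.1, hl₂.2.symm, hx]
        exact cons_prefix_cons.2 ⟨rfl, hpre⟩
      exact this.isInfix.trans hsfx.isInfix
    | [x₀, x₁], hll =>
      have hx : x₁ = a := by
        have := suffix_getLast? hsuf (by simp)
        rw [getLast?_concat] at this
        simpa using this.symm
      obtain ⟨hx₀, hx₁, hl₂⟩ : x₀ = q₀ ∧ x₁ = q₁ ∧ l₂ = [q₂] := by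
        have h0 := congrArg List.head? hll
        have h1 := congrArg (List.head? ∘ List.tail) hll
        have h2 := congrArg (List.tail ∘ List.tail) hll
        simp at h0 h1 h2
        exact ⟨h0.symm, h1.symm, h2.symm⟩
      have hq₂ : q₂ = b := by
        rw [hl₂] at hpre; simpa using (cons_prefix_cons.1 hpre).1
      have : [x₀, x₁] ++ [b] <:+: (u ++ [a]) ++ (b :: (m ++ a :: b :: v)) :=
        suffix_prefix_infix hsuf (cons_prefix_cons.2 ⟨rfl, nil_prefix⟩)
      rw [hbig]
      rw [show ([q₀, q₁, q₂] : List α) = [x₀, x₁] ++ [b] by simp [hx₀, hx₁, hq₂]]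
      exact this
    | x₀ :: x₁ :: x₂ :: l₁', hll =>
      have hlen3 := congrArg List.length hll
      simp only [length_cons, length_append, length_nil] at hlen3
      have he1 : l₁' = [] := eq_nil_of_length_eq_zero (by omega)
      have he2 : l₂ = [] := eq_nil_of_length_eq_zero (by omega)
      rw [he1] at hll hsuf
      rw [he2, append_nil] at hll
      have hin : [q₀, q₁, q₂] <:+: u ++ [a] := hll ▸ hsuf.isInfix
      refine hin.trans ?_
      exact ⟨[], b :: (m ++ a :: b :: v), by simp⟩

/-- Phase 2: remove repeated edges. -/
lemma phase2 (E : α → α → Prop) : ∀ (n : ℕ) (π : List α), π.length = n → π.Chain' E →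
    π.Chain' (· ≠ ·) →
    ∃ πr : List α, πr.Chain' E ∧ πr.Chain' (· ≠ ·) ∧ (πr.zip πr.tail).Nodup ∧
      πr.head? = π.head? ∧ πr.getLast? = π.getLast? ∧
      ∀ q₀ q₁ q₂, [q₀, q₁, q₂] <:+: πr → [q₀, q₁, q₂] <:+: π := by
  intro n
  induction n using Nat.strong_induction_on with
  | _ n ih =>
    intro π hlen hE hne
    by_cases hnd : (π.zip π.tail).Nodup
    · exact ⟨π, hE, hne, hnd, rfl, rfl, fun _ _ _ h => h⟩
    · obtain ⟨⟨a, b⟩, hdup⟩ := exists_duplicate_iff_not_nodup.2 hnd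
      have hsub : [(a, b), (a, b)] <+ π.zip π.tail := duplicate_iff_sublist.1 hdup
      have hmem : (a, b) ∈ π.zip π.tail := hdup.mem
      obtain ⟨u', v', hud⟩ := pair_mem_zip hmem
      have hab : a ≠ b := by
        have : Chain' (· ≠ ·) [a, b] := hne.infix ⟨u', v', by rw [hud]; simp⟩
        exact (isChain_cons_cons.1 this).1
      obtain ⟨u, m, v, rfl⟩ := dup_pair hab hsub
      have hE' : Chain' E (u ++ a :: b :: v) := chain'_cut2 hE
      have hne' : Chain' (· ≠ ·) (u ++ a :: b :: v) := chain'_cut2 hne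
      have hlt : (u ++ a :: b :: v).length < n := by
        simp only [length_append, length_cons] at hlen ⊢
        omega
      obtain ⟨πr, h1, h2, h3, h4, h5, h6⟩ := ih _ hlt (u ++ a :: b :: v) rfl hE' hne'
      refine ⟨πr, h1, h2, h3, ?_, ?_, ?_⟩
      · rw [h4]; cases u <;> simp
      · rw [h5, show u ++ a :: b :: v = u ++ (a :: b :: v) from rfl, getLast?_cons_append,
          show u ++ a :: b :: m ++ a :: b :: v = (u ++ a :: b :: m) ++ (a :: b :: v) by simp,
          getLast?_cons_append]
      · intro q₀ q₁ q₂ h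
        exact step2 (h6 q₀ q₁ q₂ h)

end PathRed



/-- `l` is a path from `q` to `q'` in the directed graph with edge relation `E`. -/
def IsPath {V : Type*} (E : V → V → Prop) (l : List V) (q q' : V) : Prop :=
  l.Chain' E ∧ l.head? = some q ∧ l.getLast? = some q'

/-- Every path from `q` to `q'` in a finite directed graph can be reduced to a path `πr`
from `q` to `q'` with no repeated edges and no consecutive vertex repetitions, such that
every length-3 subpath `q₀q₁q₂` of `πr` with `(q₁,q₁) ∉ E` is a subpath of the original
path, and otherwise the original path contains a subpath of the form `q₀q₁⁺q₂`. -/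
theorem path_reduction {V : Type*} [Finite V] (E : V → V → Prop)
    (q q' : V) (π : List V) (hπ : IsPath E π q q') :
    ∃ πr : List V, IsPath E πr q q' ∧ (πr.zip πr.tail).Nodup ∧ πr.Chain' (· ≠ ·) ∧
      ∀ q₀ q₁ q₂ : V, [q₀, q₁, q₂] <:+: πr →
        ((¬ E q₁ q₁ → [q₀, q₁, q₂] <:+: π) ∧
          (E q₁ q₁ → ∃ m : ℕ, 1 ≤ m ∧ (q₀ :: (List.replicate m q₁ ++ [q₂])) <:+: π)) := by
  obtain ⟨hE, hhead, hlast⟩ := hπ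
  obtain ⟨π₁, h1E, h1ne, h1h, h1l, h1P⟩ := PathRed.phase1 E π.length π rfl hE
  obtain ⟨πr, h2E, h2ne, h2nd, h2h, h2l, h2P⟩ := PathRed.phase2 E π₁.length π₁ rfl h1E h1ne
  refine ⟨πr, ⟨h2E, by rw [h2h, h1h]; exact hhead, by rw [h2l, h1l]; exact hlast⟩,
    h2nd, h2ne, ?_⟩
  intro q₀ q₁ q₂ h
  obtain ⟨m, hm, hinf⟩ := h1P q₀ q₁ q₂ (h2P _ _ _ h)
  constructor
  · intro hnE
    rcases eq_or_lt_of_le hm with h1 | h2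
    · rw [← h1] at hinf; simpa using hinf
    · exfalso
      apply hnE
      have hqq : [q₁, q₁] <:+: π := by
        refine IsInfix.trans ?_ hinf
        refine ⟨[q₀], List.replicate (m - 2) q₁ ++ [q₂], ?_⟩
        rw [show m = 2 + (m - 2) by omega, List.replicate_add]
        simp
      exact (List.isChain_cons_cons.1 (hE.infix hqq)).1
  · intro _
    exact ⟨m, hm, hinf⟩
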